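/- Let X̃, X be preorders and E a linear order, all regarded as thin categories; let ι : X̃ ⥤ X be fully faithful, and G : X̃ ⥤ E, Gʳ : E ⥤ X̃ functors such that Gʳ ⋙ G = 𝟭 E and there exists a natural transformation G ⋙ Gʳ ⟶ 𝟭 X̃. Set K := Gʳ ⋙ ι : E ⥤ X. Suppose D, L : X ⥤ E are functors such that for every object x of X, D(x) is a greatest element of the set { e : there is a morphism K(e) ⟶ x } (in particular K(D(x)) ⟶ x) and L(x) is a least element of the set { e : there is a morphism x ⟶ K(e) } (in particular x ⟶ K(L(x))). Then (L, D) is a qualifying pair: there is a natural transformation D ⟶ L, and whenever there is a morphism L(y) ⟶ D(x) in E there is a morphism y ⟶ x in X; equivalently, there is a functor Ψ : Comma L D ⥤ Comma (𝟭 X) (𝟭 X) commuting with the projections to X. -/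
import Mathlib


open CategoryTheory

/-- Diameter/Lebesgue-number abstraction: with preorders `X̃, X`, a linear order `E`,
`ι` fully faithful, `Gʳ ⋙ G = 𝟭 E`, `G ⋙ Gʳ ⟶ 𝟭 X̃`, and `K := Gʳ ⋙ ι`, if `D(x)` is a
greatest element of `{e | K(e) ⟶ x}` and `L(x)` is a least element of `{e | x ⟶ K(e)}`,
then `(L, D)` is a qualifying pair: `D ⟶ L`, a morphism `L(y) ⟶ D(x)` yields `y ⟶ x`, and
there is a functor `Ψ : Comma L D ⥤ Comma (𝟭 X) (𝟭 X)` commuting with the projections. -/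
theorem qualifying_pair_of_greatest_least
    {X' X E : Type*} [Preorder X'] [Preorder X] [LinearOrder E]
    (ι : X' ⥤ X) [ι.Full] [ι.Faithful]
    (G : X' ⥤ E) (Gr : E ⥤ X') (hGG : Gr ⋙ G = 𝟭 E) (η : G ⋙ Gr ⟶ 𝟭 X')
    (D L : X ⥤ E)
    (hD : ∀ x : X, IsGreatest {e : E | (Gr ⋙ ι).obj e ≤ x} (D.obj x))
    (hL : ∀ x : X, IsLeast {e : E | x ≤ (Gr ⋙ ι).obj e} (L.obj x)) :
    Nonempty (D ⟶ L) ∧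
    (∀ x y : X, L.obj y ≤ D.obj x → y ≤ x) ∧
    ∃ Ψ : Comma L D ⥤ Comma (𝟭 X) (𝟭 X),
      Ψ ⋙ Comma.fst (𝟭 X) (𝟭 X) = Comma.fst L D ∧
      Ψ ⋙ Comma.snd (𝟭 X) (𝟭 X) = Comma.snd L D := by
  have key : ∀ x y : X, L.obj y ≤ D.obj x → y ≤ x := by
    intro x y h
    calc y ≤ (Gr ⋙ ι).obj (L.obj y) := (hL y).1
    _ ≤ (Gr ⋙ ι).obj (D.obj x) := leOfHom ((Gr ⋙ ι).map (homOfLE h))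
    _ ≤ x := (hD x).1
  have hDL : ∀ x : X, D.obj x ≤ L.obj x := by
    intro x
    have h1 : ι.obj (Gr.obj (D.obj x)) ≤ ι.obj (Gr.obj (L.obj x)) :=
      le_trans (hD x).1 (hL x).1
    have h2 : Gr.obj (D.obj x) ≤ Gr.obj (L.obj x) :=
      leOfHom (ι.preimage (homOfLE h1))
    have h3 : G.obj (Gr.obj (D.obj x)) ≤ G.obj (Gr.obj (L.obj x)) :=
      leOfHom (G.map (homOfLE h2))
    have e1 := Functor.congr_obj hGG (D.obj x)
    have e2 := Functor.congr_obj hGG (L.obj x)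
    simp only [Functor.comp_obj, Functor.id_obj] at e1 e2
    rwa [e1, e2] at h3
  refine ⟨⟨{ app := fun x => homOfLE (hDL x),
             naturality := fun _ _ _ => Subsingleton.elim _ _ }⟩, key, ?_⟩
  refine ⟨{ obj := fun f => ⟨f.left, f.right, homOfLE (key f.right f.left (leOfHom f.hom))⟩
            map := fun f => ⟨f.left, f.right, Subsingleton.elim _ _⟩
            map_id := fun _ => rfl
            map_comp := fun _ _ => rfl }, rfl, rfl⟩
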